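/- Let A be an abelian category with enough projectives and enough injectives, and let U be a tilting subcategory. Then U^⊥₁ = Fac U, where U^⊥₁ = {X ∈ A : Ext¹(U₀, X) = 0 for all U₀ ∈ U}. -/

import Mathlib

open CategoryTheory Limits Opposite

noncomputable section

universe v u

variable {C : Type u} [Category.{v} C] [Abelian C] [EnoughProjectives C]

attribute [local instance] CategoryTheory.Abelian.hasFiniteBiproducts

/-- `Fac M`: quotients of finite direct sums of objects of `M`. -/
def Fac (M : Set C) : Set C :=
  {X | ∃ (n : ℕ) (f : Fin n → C), (∀ i, f i ∈ M) ∧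
    haveI : HasBiproductsOfShape (Fin n) C := HasFiniteBiproducts.out n
    ∃ e : (⨁ f) ⟶ X, Epi e}

/-- Vanishing of `Ext¹(X, Y)`. -/
def ext1Zero (X Y : C) : Prop := Subsingleton (((Ext ℤ C 1).obj (op X)).obj Y)

/-- Vanishing of `Ext²(X, Y)`. -/
def ext2Zero (X Y : C) : Prop := Subsingleton (((Ext ℤ C 2).obj (op X)).obj Y)

/-- `v : P ⟶ V₀` is a left `M`-approximation. -/
def IsLeftApprox (M : Set C) {P V₀ : C} (v : P ⟶ V₀) : Prop :=
  ∀ V' ∈ M, ∀ h : P ⟶ V', ∃ t : V₀ ⟶ V', v ≫ t = h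

/-- `u : U₀ ⟶ X` is a right `M`-approximation. -/
def IsRightApprox (M : Set C) {U₀ X : C} (u : U₀ ⟶ X) : Prop :=
  ∀ M' ∈ M, ∀ h : M' ⟶ X, ∃ t : M' ⟶ U₀, t ≫ u = h

/-- The Ext-projective objects of `S`. -/
def ExtProj (S : Set C) : Set C := {D ∈ S | ∀ Z ∈ S, ext1Zero D Z}

/-- `M` is τ-rigid: `Ext¹(M, Fac M) = 0`. -/
def TauRigid (M : Set C) : Prop := ∀ M₀ ∈ M, ∀ X ∈ Fac M, ext1Zero M₀ X

/-- `P` admits an exact sequence `P ⟶ Ma ⟶ Mb ⟶ 0` with `Ma, Mb ∈ M` and the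
first map a left `M`-approximation. -/
def HasApproxSeq (M : Set C) (P : C) : Prop :=
  ∃ M₀ ∈ M, ∃ M₁ ∈ M, ∃ (m : P ⟶ M₀) (g : M₀ ⟶ M₁) (w : m ≫ g = 0),
    (ShortComplex.mk m g w).Exact ∧ Epi g ∧ IsLeftApprox M m

/-- `M` is a support τ-tilting subcategory. -/
def SupportTauTilting (M : Set C) : Prop :=
  TauRigid M ∧ ∀ P : C, Projective P → HasApproxSeq M P

/-- `0 ⟶ X ⟶ Y ⟶ Z ⟶ 0` is a short exact sequence. -/
def SES {X Y Z : C} (f : X ⟶ Y) (g : Y ⟶ Z) : Prop :=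
  ∃ w : f ≫ g = 0, (ShortComplex.mk f g w).Exact ∧ Mono f ∧ Epi g

/-- `U` is hereditary: `Ext²(U, −) = 0`. -/
def Hereditary1 (U : Set C) : Prop := ∀ U₀ ∈ U, ∀ X : C, ext2Zero U₀ X

/-- `U` is partial tilting. -/
def PartialTilting (U : Set C) : Prop :=
  Hereditary1 U ∧ ∀ U₀ ∈ U, ∀ U₁ ∈ U, ext1Zero U₀ U₁

/-- `U` is tilting. -/
def Tilting (U : Set C) : Prop :=
  PartialTilting U ∧ ∀ P : C, Projective P →
    ∃ Ua ∈ U, ∃ Ub ∈ U, ∃ (i : P ⟶ Ua) (p : Ua ⟶ Ub), SES i p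

/-- `U^⊥₁ = {X | Ext¹(U, X) = 0}`. -/
def Perp1 (U : Set C) : Set C := {X | ∀ U₀ ∈ U, ext1Zero U₀ X}

/-- `M` is closed under finite direct sums and direct summands. -/
def AdditivelyClosed (M : Set C) : Prop :=
  (∀ (n : ℕ) (f : Fin n → C), (∀ i, f i ∈ M) →
    haveI : HasBiproductsOfShape (Fin n) C := HasFiniteBiproducts.out n
    (⨁ f) ∈ M) ∧
  (∀ M₀ ∈ M, ∀ (X : C) (r : M₀ ⟶ X) (s : X ⟶ M₀), s ≫ r = 𝟙 X → X ∈ M)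

/-- The additive closure of a class of objects: direct summands of finite
direct sums of its objects. -/
def AddClosure (X : Set C) : Set C :=
  {Y | ∃ (n : ℕ) (f : Fin n → C), (∀ i, f i ∈ X) ∧
    haveI : HasBiproductsOfShape (Fin n) C := HasFiniteBiproducts.out n
    ∃ (r : (⨁ f) ⟶ Y) (s : Y ⟶ ⨁ f), s ≫ r = 𝟙 Y}

/- AUX LEMMAS -/
section Aux

lemma modcat_subsingleton_iff_isZero (M : ModuleCat ℤ) :
    Subsingleton M ↔ IsZero M := by
  constructor
  · intro h; exact ModuleCat.isZero_of_subsingleton M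
  · intro h
    have h0 := h.eq_of_src (𝟙 M) 0
    refine ⟨fun a b => ?_⟩
    have hz : ∀ x : M, x = 0 := fun x => by
      calc x = (𝟙 M) x := rfl
      _ = (0 : M ⟶ M) x := by rw [h0]
      _ = 0 := rfl
    rw [hz a, hz b]

lemma ext_vanish_iff (W Y : C) (P : ProjectiveResolution W) (n : ℕ) :
    Subsingleton (((Ext ℤ C (n+1)).obj (op W)).obj Y) ↔
    ∀ β : P.complex.X (n+1) ⟶ Y, P.complex.d (n+2) (n+1) ≫ β = 0 →
      ∃ γ : P.complex.X n ⟶ Y, P.complex.d (n+1) n ≫ γ = β := by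
  have e := P.isoExt (R := ℤ) (n+1) Y
  rw [show Subsingleton (((Ext ℤ C (n+1)).obj (op W)).obj Y) ↔ _ from
    modcat_subsingleton_iff_isZero _, Iso.isZero_iff e,
    ← HomologicalComplex.exactAt_iff_isZero_homology,
    HomologicalComplex.exactAt_iff' _ n (n+1) (n+2) (by simp) (by simp),
    ShortComplex.moduleCat_exact_iff]
  constructor
  · intro h β hβ
    obtain ⟨γ, hγ⟩ := h β hβ
    exact ⟨γ, hγ⟩
  · intro h β hβ
    obtain ⟨γ, hγ⟩ := h β hβ
    exact ⟨γ, hγ⟩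

lemma ext1Zero_iff (W Y : C) (P : ProjectiveResolution W) :
    ext1Zero W Y ↔ ∀ β : P.complex.X 1 ⟶ Y, P.complex.d 2 1 ≫ β = 0 →
      ∃ γ : P.complex.X 0 ⟶ Y, P.complex.d 1 0 ≫ γ = β :=
  ext_vanish_iff W Y P 0

lemma ext2Zero_iff (W Y : C) (P : ProjectiveResolution W) :
    ext2Zero W Y ↔ ∀ β : P.complex.X 2 ⟶ Y, P.complex.d 3 2 ≫ β = 0 →
      ∃ γ : P.complex.X 1 ⟶ Y, P.complex.d 2 1 ≫ γ = β :=
  ext_vanish_iff W Y P 1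

lemma ext1Zero_of_epi_kernel {W M X : C} (e : M ⟶ X) [Epi e]
    (h1 : ext1Zero W M) (h2 : ext2Zero W (kernel e)) : ext1Zero W X := by
  set P := ProjectiveResolution.of W with hP
  rw [ext1Zero_iff W X P]
  rw [ext1Zero_iff W M P] at h1
  rw [ext2Zero_iff W (kernel e) P] at h2
  intro β hβ
  set β' := Projective.factorThru β e with hβ'def
  have hβ'e : β' ≫ e = β := Projective.factorThru_comp β e
  have hker : (P.complex.d 2 1 ≫ β') ≫ e = 0 := by
    rw [Category.assoc, hβ'e, hβ]
  set δ := kernel.lift e (P.complex.d 2 1 ≫ β') hker with hδdef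
  have hδι : δ ≫ kernel.ι e = P.complex.d 2 1 ≫ β' := kernel.lift_ι _ _ _
  have hδ0 : P.complex.d 3 2 ≫ δ = 0 := by
    rw [← cancel_mono (kernel.ι e), Category.assoc, hδι, zero_comp,
      HomologicalComplex.d_comp_d_assoc, zero_comp]
  obtain ⟨η, hη⟩ := h2 δ hδ0
  have hcoc : P.complex.d 2 1 ≫ (β' - η ≫ kernel.ι e) = 0 := by
    rw [Preadditive.comp_sub, ← Category.assoc, hη, hδι, sub_self]
  obtain ⟨γ', hγ'⟩ := h1 _ hcoc
  refine ⟨γ' ≫ e, ?_⟩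
  rw [← Category.assoc, hγ', Preadditive.sub_comp, hβ'e, Category.assoc,
    kernel.condition, comp_zero, sub_zero]

lemma ext1Zero_biproduct {W : C} {n : ℕ} (f : Fin n → C)
    [HasBiproductsOfShape (Fin n) C]
    (h : ∀ i, ext1Zero W (f i)) : ext1Zero W (⨁ f) := by
  set P := ProjectiveResolution.of W with hP
  rw [ext1Zero_iff W _ P]
  intro β hβ
  have h' : ∀ i, ∃ γi : P.complex.X 0 ⟶ f i,
      P.complex.d 1 0 ≫ γi = β ≫ biproduct.π f i := fun i =>
    (ext1Zero_iff W (f i) P).mp (h i) _ (by rw [← Category.assoc, hβ, zero_comp])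
  choose γ hγ using h'
  refine ⟨biproduct.lift γ, ?_⟩
  ext i
  simp [hγ]

lemma exists_section_of_ext1Zero {X Y Z : C} (f : X ⟶ Y) (g : Y ⟶ Z) (w : f ≫ g = 0)
    (hex : (ShortComplex.mk f g w).Exact) [Mono f] [Epi g]
    (h : ext1Zero Z X) : ∃ σ : Z ⟶ Y, σ ≫ g = 𝟙 Z := by
  set P := ProjectiveResolution.of Z with hP
  rw [ext1Zero_iff Z X P] at h
  set α := Projective.factorThru (X := Z) (P.π.f 0) g with hαdef
  have hα : α ≫ g = P.π.f 0 := Projective.factorThru_comp _ _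
  have h1 : (P.complex.d 1 0 ≫ α) ≫ g = 0 := by
    rw [Category.assoc, hα]; exact P.complex_d_comp_π_f_zero
  haveI : Mono (ShortComplex.mk f g w).f := by dsimp; infer_instance
  obtain ⟨β, hβ⟩ := hex.lift' (P.complex.d 1 0 ≫ α) h1
  dsimp at hβ
  have hβ0 : P.complex.d 2 1 ≫ β = 0 := by
    rw [← cancel_mono f, zero_comp, Category.assoc, hβ,
      HomologicalComplex.d_comp_d_assoc, zero_comp]
  obtain ⟨γ, hγ⟩ := h β hβ0
  have hd : P.complex.d 1 0 ≫ (α - γ ≫ f) = 0 := by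
    rw [Preadditive.comp_sub, ← Category.assoc, hγ, hβ, sub_self]
  obtain ⟨σ, hσ⟩ := CokernelCofork.IsColimit.desc' P.isColimitCokernelCofork (α - γ ≫ f) hd
  refine ⟨σ, ?_⟩
  have hσ' : P.π.f 0 ≫ σ = α - γ ≫ f := hσ
  haveI hepi : Epi (X := P.complex.X 0) (Y := Z) (P.π.f 0) := by
    exact (inferInstance : Epi (P.π.f 0))
  rw [← cancel_epi (X := P.complex.X 0) (Y := Z) (P.π.f 0)]
  erw [← Category.assoc, hσ']
  rw [Preadditive.sub_comp, hα,
    Category.assoc, w, comp_zero]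
  erw [sub_zero, Category.comp_id]

lemma pushout_exact {P₀ Ua X Ub : C} (i : P₀ ⟶ Ua) (π : P₀ ⟶ X) (p : Ua ⟶ Ub)
    (w : i ≫ p = 0) (hex : (ShortComplex.mk i p w).Exact) [Mono i]
    (q : pushout i π ⟶ Ub) (hlq : pushout.inl i π ≫ q = p)
    (hrq : pushout.inr i π ≫ q = 0) :
    (ShortComplex.mk (pushout.inr i π) q hrq).Exact := by
  rw [ShortComplex.exact_iff_exact_up_to_refinements]
  intro A x₂ hx₂
  dsimp at x₂ hx₂ ⊢
  set b : Ua ⊞ X ⟶ pushout i π := biprod.desc (pushout.inl i π) (pushout.inr i π) with hbdef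
  haveI hb : Epi b := by
    constructor
    intro T u v huv
    apply pushout.hom_ext
    · simpa [hbdef] using biprod.inl ≫= huv
    · simpa [hbdef] using biprod.inr ≫= huv
  set u := pullback.snd x₂ b ≫ biprod.fst with hudef
  set x := pullback.snd x₂ b ≫ biprod.snd with hxdef
  have hsnd : pullback.snd x₂ b = biprod.lift u x := by
    apply biprod.hom_ext <;> simp [hudef, hxdef]
  have hcomm : pullback.fst x₂ b ≫ x₂ =
      u ≫ pushout.inl i π + x ≫ pushout.inr i π := by
    rw [pullback.condition, hsnd]
    simp [hbdef]
  have hup : u ≫ p = 0 := by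
    have h0 : (pullback.fst x₂ b ≫ x₂) ≫ q = 0 := by
      rw [Category.assoc, hx₂, comp_zero]
    rw [hcomm] at h0
    simpa [hlq, hrq] using h0
  haveI : Mono (ShortComplex.mk i p w).f := by dsimp; infer_instance
  obtain ⟨v, hv⟩ := hex.lift' u hup
  dsimp at hv
  refine ⟨pullback x₂ b, pullback.fst x₂ b, inferInstance, v ≫ π + x, ?_⟩
  have hkey : (v ≫ π) ≫ pushout.inr i π = u ≫ pushout.inl i π := by
    rw [Category.assoc, ← pushout.condition, ← Category.assoc, hv]
  rw [hcomm, Preadditive.add_comp, hkey]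

end Aux

theorem stmt11 [EnoughInjectives C] (U : Set C) (h : Tilting U) :
    Perp1 U = Fac U := by
  obtain ⟨⟨hher, hrig⟩, htilt⟩ := h
  apply Set.Subset.antisymm
  · intro X hX
    obtain ⟨Ua, hUa, Ub, hUb, i, p, w, hex, hm, hep⟩ :=
      htilt (Projective.over X) (Projective.projective_over X)
    haveI := hm; haveI := hep
    set π : Projective.over X ⟶ X := Projective.π X with hπdef
    have hdesc : i ≫ p = π ≫ (0 : X ⟶ Ub) := by rw [w, comp_zero]
    set q : pushout i π ⟶ Ub := pushout.desc p 0 hdesc with hqdef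
    have hlq : pushout.inl i π ≫ q = p := pushout.inl_desc _ _ _
    have hrq : pushout.inr i π ≫ q = 0 := pushout.inr_desc _ _ _
    haveI : Mono (pushout.inr i π) := Abelian.mono_pushout_of_mono_f i π
    haveI : Epi q := epi_of_epi_fac hlq
    have hqex := pushout_exact i π p w hex q hlq hrq
    obtain ⟨σ, hσ⟩ := exists_section_of_ext1Zero (pushout.inr i π) q hrq hqex (hX Ub hUb)
    have spl := ShortComplex.Splitting.ofExactOfSection
      (ShortComplex.mk (pushout.inr i π) q hrq) hqex σ hσ (by dsimp; infer_instance)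
    have hr : pushout.inr i π ≫ spl.r = 𝟙 X := spl.f_r
    haveI : Epi spl.r := epi_of_epi_fac hr
    haveI : Epi (pushout.inl i π) := inferInstance
    refine ⟨1, fun _ => Ua, fun _ => hUa, biproduct.desc (fun _ => pushout.inl i π ≫ spl.r), ?_⟩
    exact epi_of_epi_fac (biproduct.ι_desc (fun _ : Fin 1 => pushout.inl i π ≫ spl.r) 0)
  · rintro X ⟨n, f, hf, e, he⟩
    intro W hW
    haveI : HasBiproductsOfShape (Fin n) C := HasFiniteBiproducts.out n
    haveI := he
    exact ext1Zero_of_epi_kernel e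
      (ext1Zero_biproduct f (fun i => hrig W hW (f i) (hf i)))
      (hher W hW (kernel e))
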